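/- Skolemization of the boss example (Formula 6): Let D be a finite nonempty type and let wW⁺, wW⁻, wB⁺, wB⁻ : ℝ be weights for the predicates WorksFor and Boss. Then the sum over all pairs (Wf : D → D → Bool, B : D → Bool) satisfying (∀ x, ∃ y, Wf x y = true ∨ B x = true) of (∏_{x,y} if Wf x y then wW⁺ else wW⁻) · (∏_x if B x then wB⁺ else wB⁻) equals the sum over all triples (Wf : D → D → Bool, B : D → Bool, S : D → Bool) satisfying (∀ x y, S x = true ∨ Wf x y = false) and (∀ x, S x = true ∨ B x = false) of (∏_{x,y} if Wf x y then wW⁺ else wW⁻) · (∏_x if B x then wB⁺ else wB⁻) · (∏_x if S x then (1:ℝ) else -1). -/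

import Mathlib

open Classical in
lemma skolem_inner (D : Type*) [Fintype D] (P : D → Prop) :
    (∑ s : D → Bool,
      (if (∀ x, P x → s x = true) then ∏ x, (if s x then (1:ℝ) else -1) else 0))
    = if (∀ x, P x) then 1 else 0 := by
  classical
  have step1 : ∀ s : D → Bool,
      (if (∀ x, P x → s x = true) then ∏ x, (if s x then (1:ℝ) else -1) else 0)
      = ∏ x, (if (P x → s x = true) then (if s x then (1:ℝ) else -1) else 0) := by
    intro s
    by_cases h : ∀ x, P x → s x = true
    · rw [if_pos h]
      exact Finset.prod_congr rfl (fun x _ => by rw [if_pos (h x)])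
    · rw [if_neg h]
      push_neg at h
      obtain ⟨x, hx⟩ := h
      exact (Finset.prod_eq_zero (Finset.mem_univ x)
        (by rw [if_neg]; tauto)).symm
  simp only [step1]
  have := Finset.prod_univ_sum (fun _ : D => (Finset.univ : Finset Bool))
    (fun x b => if (P x → b = true) then (if b then (1:ℝ) else -1) else 0)
  rw [Fintype.piFinset_univ] at this
  rw [← this]
  have step2 : ∀ x : D, (∑ b : Bool, if (P x → b = true) then (if b then (1:ℝ) else -1) else 0)
      = if P x then 1 else 0 := by
    intro x
    by_cases h : P x <;> simp [Fintype.sum_bool, h]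
  simp only [step2]
  by_cases h : ∀ x, P x
  · simp [h]
  · rw [if_neg h]
    push_neg at h
    obtain ⟨x, hx⟩ := h
    exact Finset.prod_eq_zero (Finset.mem_univ x) (by rw [if_neg hx])

open Classical in
/-- Skolemization of the boss example (Formula 6):
∀x ∃y, WorksFor(x,y) ∨ Boss(x). -/
theorem skolemization_boss_example
    (D : Type*) [Fintype D] [Nonempty D]
    (wWp wWm wBp wBm : ℝ) :
    ∑ p ∈ Finset.univ.filter
        (fun p : (D → D → Bool) × (D → Bool) =>
          ∀ x, ∃ y, p.1 x y = true ∨ p.2 x = true),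
      (∏ x, ∏ y, (if p.1 x y then wWp else wWm)) *
        ∏ x, (if p.2 x then wBp else wBm)
    =
    ∑ q ∈ Finset.univ.filter
        (fun q : (D → D → Bool) × (D → Bool) × (D → Bool) =>
          (∀ x y, q.2.2 x = true ∨ q.1 x y = false) ∧
          (∀ x, q.2.2 x = true ∨ q.2.1 x = false)),
      (∏ x, ∏ y, (if q.1 x y then wWp else wWm)) *
        (∏ x, (if q.2.1 x then wBp else wBm)) *
        ∏ x, (if q.2.2 x then (1 : ℝ) else -1) := by
  classical
  rw [Finset.sum_filter, Finset.sum_filter]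
  simp only [Fintype.sum_prod_type]
  refine Finset.sum_congr rfl (fun a _ => Finset.sum_congr rfl (fun b _ => ?_))
  -- RHS inner sum over s
  have key : ∀ s : D → Bool,
      ((∀ x y, s x = true ∨ a x y = false) ∧ (∀ x, s x = true ∨ b x = false))
      ↔ (∀ x, ((∃ y, a x y = true) ∨ b x = true) → s x = true) := by
    intro s
    constructor
    · rintro ⟨h1, h2⟩ x hx
      rcases hx with ⟨y, hy⟩ | hb
      · rcases h1 x y with h | h
        · exact h
        · rw [hy] at h; cases h
      · rcases h2 x with h | h
        · exact h
        · rw [hb] at h; cases h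
    · intro h
      constructor
      · intro x y
        by_cases hxy : a x y = true
        · exact Or.inl (h x (Or.inl ⟨y, hxy⟩))
        · exact Or.inr (Bool.eq_false_iff.mpr (by simpa using hxy))
      · intro x
        by_cases hb : b x = true
        · exact Or.inl (h x (Or.inr hb))
        · exact Or.inr (Bool.eq_false_iff.mpr (by simpa using hb))
  have hR : (∑ s : D → Bool,
      if ((∀ x y, s x = true ∨ a x y = false) ∧ (∀ x, s x = true ∨ b x = false))
      then (∏ x, ∏ y, (if a x y then wWp else wWm)) *
        (∏ x, (if b x then wBp else wBm)) *
        ∏ x, (if s x then (1 : ℝ) else -1) else 0)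
      = (∏ x, ∏ y, (if a x y then wWp else wWm)) *
        (∏ x, (if b x then wBp else wBm)) *
        (if (∀ x, (∃ y, a x y = true) ∨ b x = true) then 1 else 0) := by
    have h0 := skolem_inner D (fun x => (∃ y, a x y = true) ∨ b x = true)
    have h1 : (∑ s : D → Bool,
        if ((∀ x y, s x = true ∨ a x y = false) ∧ (∀ x, s x = true ∨ b x = false))
        then (∏ x, ∏ y, (if a x y then wWp else wWm)) *
          (∏ x, (if b x then wBp else wBm)) *
          ∏ x, (if s x then (1 : ℝ) else -1) else 0)
        = (∏ x, ∏ y, (if a x y then wWp else wWm)) *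
          (∏ x, (if b x then wBp else wBm)) *
          (∑ s : D → Bool,
            if (∀ x, ((∃ y, a x y = true) ∨ b x = true) → s x = true)
            then ∏ x, (if s x then (1:ℝ) else -1) else 0) := by
      rw [Finset.mul_sum]
      refine Finset.sum_congr rfl (fun s _ => ?_)
      by_cases h : (∀ x, ((∃ y, a x y = true) ∨ b x = true) → s x = true)
      · rw [if_pos ((key s).mpr h), if_pos h]
      · rw [if_neg (fun hc => h ((key s).mp hc)), if_neg h, mul_zero]
    rw [h1]
    refine congrArg (HMul.hMul ((∏ x, ∏ y, (if a x y then wWp else wWm)) *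
        ∏ x, (if b x then wBp else wBm))) ?_
    convert h0 using 2 with s _
    split_ifs <;> rfl
  rw [hR]
  have hiff : (∀ x, ∃ y, a x y = true ∨ b x = true)
      ↔ (∀ x, (∃ y, a x y = true) ∨ b x = true) := by
    constructor
    · intro h x
      obtain ⟨y, hy⟩ := h x
      rcases hy with hy | hy
      · exact Or.inl ⟨y, hy⟩
      · exact Or.inr hy
    · intro h x
      rcases h x with ⟨y, hy⟩ | hb
      · exact ⟨y, Or.inl hy⟩
      · exact ⟨Classical.arbitrary D, Or.inr hb⟩
  split
  · rw [if_pos (by rwa [← hiff]), mul_one]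
  · rw [if_neg (by rwa [← hiff]), mul_zero]
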